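/- The Joukowski map g(z) = (z + 1/z)/2 restricted to the domain {z ∈ ℂ : |z| > 1} is a holomorphic bijection from {z ∈ ℂ : |z| > 1} onto ℂ ∖ [−1, 1], where [−1, 1] denotes the real segment {x ∈ ℝ : −1 ≤ x ≤ 1} viewed as a subset of ℂ. -/

import Mathlib

open Set

lemma ne_zero_of_one_lt_abs {z : ℂ} (h : 1 < ‖z‖) : z ≠ 0 := by
  intro h0; simp [h0] at h; linarith

theorem statement10 :
    DifferentiableOn ℂ (fun z : ℂ => (z + z⁻¹) / 2) {z : ℂ | 1 < ‖z‖} ∧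
    Set.BijOn (fun z : ℂ => (z + z⁻¹) / 2) {z : ℂ | 1 < ‖z‖}
      ((Complex.ofReal '' Icc (-1 : ℝ) 1)ᶜ) := by
  constructor
  · intro z hz
    have hz0 : z ≠ 0 := ne_zero_of_one_lt_abs hz
    exact ((differentiableAt_id.add (differentiableAt_inv hz0)).div_const 2).differentiableWithinAt
  refine ⟨?_, ?_, ?_⟩
  · -- MapsTo
    intro z hz
    simp only [mem_setOf_eq] at hz
    have hz0 : z ≠ 0 := ne_zero_of_one_lt_abs hz
    rintro ⟨x, ⟨hx1, hx2⟩, hxe⟩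
    have hy2 : Real.sqrt (1 - x ^ 2) ^ 2 = 1 - x ^ 2 := Real.sq_sqrt (by nlinarith)
    set y := Real.sqrt (1 - x ^ 2) with hy
    have hyC : (y : ℂ) ^ 2 = 1 - (x : ℂ) ^ 2 := by exact_mod_cast hy2
    have hq : z ^ 2 - 2 * (x : ℂ) * z + 1 = 0 := by
      field_simp at hxe
      linear_combination -hxe
    have hyI : ((y : ℂ) * Complex.I) ^ 2 = (x : ℂ) ^ 2 - 1 := by
      rw [mul_pow, Complex.I_sq]; linear_combination -hyC
    have hfact : (z - ((x : ℂ) + y * Complex.I)) * (z - ((x : ℂ) - y * Complex.I)) = 0 := by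
      linear_combination hq - hyI
    have habs : ∀ s : ℝ, z = (x : ℂ) + s * Complex.I → x ^ 2 + s ^ 2 = 1 → False := by
      intro s hzs hxs
      have : ‖z‖ = 1 := by
        rw [hzs, Complex.norm_def, Complex.normSq_apply]
        simp
        nlinarith [hxs]
      linarith
    rcases mul_eq_zero.mp hfact with h | h
    · exact habs y (by linear_combination h) (by nlinarith)
    · exact habs (-y) (by push_cast; linear_combination h) (by nlinarith)
  · -- InjOn
    intro z hz w hw h
    simp only [mem_setOf_eq] at hz hw
    have hz0 : z ≠ 0 := ne_zero_of_one_lt_abs hz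
    have hw0 : w ≠ 0 := ne_zero_of_one_lt_abs hw
    simp only at h
    have key : (z - w) * (z * w - 1) = 0 := by
      field_simp at h
      linear_combination h
    rcases mul_eq_zero.mp key with h1 | h1
    · linear_combination h1
    · exfalso
      have : ‖z * w‖ = 1 := by rw [sub_eq_zero] at h1; simp [h1]
      rw [norm_mul] at this
      nlinarith
  · -- SurjOn
    intro w hw
    obtain ⟨s, hs⟩ := IsAlgClosed.exists_pow_nat_eq (w ^ 2 - 1) (n := 2) (by norm_num)
    have hprod : (w + s) * (w - s) = 1 := by linear_combination -hs
    have h1ne : w + s ≠ 0 := by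
      intro h0; rw [h0, zero_mul] at hprod; exact zero_ne_one hprod
    have h2ne : w - s ≠ 0 := by
      intro h0; rw [h0, mul_zero] at hprod; exact zero_ne_one hprod
    have hinv1 : (w + s)⁻¹ = w - s := inv_eq_of_mul_eq_one_right hprod
    have hinv2 : (w - s)⁻¹ = w + s := inv_eq_of_mul_eq_one_right (by linear_combination hprod)
    by_cases hc1 : 1 < ‖w + s‖
    · exact ⟨w + s, hc1, by simp [hinv1]⟩
    by_cases hc2 : 1 < ‖w - s‖
    · exact ⟨w - s, hc2, by simp [hinv2]⟩
    exfalso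
    push_neg at hc1 hc2
    have hmul : ‖w + s‖ * ‖w - s‖ = 1 := by
      rw [← norm_mul, hprod, norm_one]
    have ha1 : ‖w + s‖ = 1 := by
      have h1pos : 0 < ‖w + s‖ := norm_pos_iff.mpr h1ne
      nlinarith
    have hconj : w - s = (starRingEnd ℂ) (w + s) := by
      rw [← hinv1, Complex.inv_def]
      rw [Complex.normSq_eq_norm_sq, ha1]
      simp
    have hre : w = ((w + s).re : ℂ) := by
      have := Complex.add_conj (w + s)
      rw [← hconj] at this
      push_cast at this
      linear_combination this / 2
    apply hw
    refine ⟨(w + s).re, ⟨?_, ?_⟩, hre.symm⟩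
    · have := Complex.abs_re_le_norm (w + s)
      rw [ha1] at this
      cases abs_le.mp this; linarith
    · have := Complex.abs_re_le_norm (w + s)
      rw [ha1] at this
      exact (abs_le.mp this).2
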